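/- Let x > 0 be a real number and let k, n ∈ ℕ₀ with k ≤ n. Then (2k+x)_{n−k} ≥ min{x, 1} · (1/(1+n)) · (n+k)! / (2k)!. -/
import Mathlib


/-- The Pochhammer symbol `(x)_n = x (x+1) ⋯ (x+n-1)` for real `x`. -/
noncomputable def pochR (x : ℝ) (n : ℕ) : ℝ := ∏ i ∈ Finset.range n, (x + i)

lemma pochR_factorial (a m : ℕ) :
    (a.factorial : ℝ) * pochR ((a : ℝ) + 1) m = ((a + m).factorial : ℝ) := by
  induction m with
  | zero => simp [pochR]
  | succ j ih =>
    have h : pochR ((a:ℝ) + 1) (j+1) = pochR ((a:ℝ)+1) j * ((a:ℝ)+1+j) := by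
      simp [pochR, Finset.prod_range_succ]
    rw [h, ← mul_assoc, ih]
    have : a + (j+1) = (a+j) + 1 := by ring
    rw [this, Nat.factorial_succ]
    push_cast
    ring

lemma pochR_nonneg {z : ℝ} (hz : 0 ≤ z) (m : ℕ) : 0 ≤ pochR z m :=
  Finset.prod_nonneg fun i _ => by positivity

lemma pochR_mono {z y : ℝ} (hz : 0 ≤ z) (hzy : z ≤ y) (m : ℕ) :
    pochR z m ≤ pochR y m :=
  Finset.prod_le_prod (fun i _ => by positivity)
    (fun i _ => by linarith)

theorem pochR_lower_bound_shifted (x : ℝ) (hx : 0 < x) (k n : ℕ) (hkn : k ≤ n) :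
    min x 1 * (1 / (1 + (n : ℝ))) * ((n + k).factorial / (2 * k).factorial : ℝ) ≤
      pochR (2 * (k : ℝ) + x) (n - k) := by
  have hM1 : min x 1 ≤ 1 := min_le_right _ _
  have hMx : min x 1 ≤ x := min_le_left _ _
  have hM0 : 0 < min x 1 := lt_min hx one_pos
  have hfpos : (0:ℝ) < ((2*k).factorial : ℝ) := by positivity
  obtain ⟨m, hm⟩ : ∃ m, n = k + m := ⟨n - k, by omega⟩
  subst hm
  have hnk : k + m - k = m := by omega
  rw [hnk]
  cases m with
  | zero =>
    simp only [pochR, Finset.range_zero, Finset.prod_empty]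
    have : (k + 0 + k) = 2*k := by ring
    rw [this]
    rw [div_self (ne_of_gt hfpos)]
    have h1 : (0:ℝ) < 1 + (k:ℝ) := by positivity
    have : (1:ℝ) / (1 + ((k+0:ℕ):ℝ)) ≤ 1 := by
      push_cast
      rw [div_le_one (by positivity)]
      linarith [Nat.cast_nonneg (α := ℝ) k]
    nlinarith
  | succ j =>
    -- pochR (2k+x) (j+1) = (2k+x) * pochR (2k+x+1) j
    have hsplit : pochR (2*(k:ℝ) + x) (j+1)
        = (2*(k:ℝ) + x) * pochR (2*(k:ℝ) + x + 1) j := by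
      rw [pochR, Finset.prod_range_succ']
      simp only [Nat.cast_zero, add_zero]
      rw [mul_comm, pochR]
      congr 1
      apply Finset.prod_congr rfl
      intro i _
      push_cast
      ring
    rw [hsplit]
    -- lower bound tail by pochR (2k+1) j = (2k+j)!/(2k)!
    have htail : ((2*k+j).factorial : ℝ) / ((2*k).factorial : ℝ)
        ≤ pochR (2*(k:ℝ) + x + 1) j := by
      have h1 : pochR ((2*k : ℕ) + 1 : ℝ) j ≤ pochR (2*(k:ℝ) + x + 1) j := by
        apply pochR_mono (by positivity)
        push_cast
        linarith
      have h2 : ((2*k).factorial : ℝ) * pochR (((2*k : ℕ) : ℝ) + 1) j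
          = ((2*k + j).factorial : ℝ) := pochR_factorial (2*k) j
      rw [div_le_iff₀ hfpos]
      push_cast at h1 h2 ⊢
      nlinarith
    -- first factor bound
    have hfirst : min x 1 * (2*(k:ℝ) + 1) ≤ 2*(k:ℝ) + x := by
      rcases le_total x 1 with h | h
      · rw [min_eq_left h]
        have : (0:ℝ) ≤ (k:ℝ) := Nat.cast_nonneg k
        nlinarith
      · rw [min_eq_right h]
        linarith
    -- factorial relation: (k+(j+1)+k)! = (2k+j)! * (2k+j+1)
    have hfac : ((k + (j+1) + k).factorial : ℝ)
        = ((2*k+j).factorial : ℝ) * ((2:ℝ)*k + j + 1) := by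
      have : k + (j+1) + k = (2*k+j) + 1 := by ring
      rw [this, Nat.factorial_succ]
      push_cast
      ring
    have hn1 : (0:ℝ) < 1 + ((k + (j+1) : ℕ) : ℝ) := by positivity
    have hFj : (0:ℝ) < ((2*k+j).factorial : ℝ) := by positivity
    -- key scalar inequality: (2k+j+1)/(1+n) ≤ 2k+1
    have hkey : (2*(k:ℝ) + j + 1) / (1 + ((k + (j+1) : ℕ) : ℝ)) ≤ 2*(k:ℝ) + 1 := by
      rw [div_le_iff₀ hn1]
      push_cast
      have hk0 : (0:ℝ) ≤ (k:ℝ) := Nat.cast_nonneg k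
      have hj0 : (0:ℝ) ≤ (j:ℝ) := Nat.cast_nonneg j
      nlinarith
    -- chain
    calc min x 1 * (1 / (1 + ((k + (j+1) : ℕ) : ℝ)))
          * (((k + (j+1) + k).factorial : ℝ) / ((2*k).factorial : ℝ))
        = min x 1 * ((2*(k:ℝ) + j + 1) / (1 + ((k + (j+1) : ℕ) : ℝ)))
          * (((2*k+j).factorial : ℝ) / ((2*k).factorial : ℝ)) := by
          rw [hfac]; ring
      _ ≤ min x 1 * (2*(k:ℝ) + 1)
          * (((2*k+j).factorial : ℝ) / ((2*k).factorial : ℝ)) := by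
          apply mul_le_mul_of_nonneg_right _ (by positivity)
          exact mul_le_mul_of_nonneg_left hkey (le_of_lt hM0)
      _ ≤ (2*(k:ℝ) + x) * (((2*k+j).factorial : ℝ) / ((2*k).factorial : ℝ)) := by
          apply mul_le_mul_of_nonneg_right hfirst (by positivity)
      _ ≤ (2*(k:ℝ) + x) * pochR (2*(k:ℝ) + x + 1) j := by
          apply mul_le_mul_of_nonneg_left htail (by positivity)
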